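/- For all strictly positive parameter values, the Jacobian matrix DF(v₁) of F at the virus-free equilibrium v₁ = (1,0,0,0,0,0,0) is singular (has 0 as an eigenvalue) if and only if at least one of the following three parameter relations holds: (i) β₁ = β₂; (ii) α·((κ₁ − ν)γ₁ − μν) = ζ(γ₁ + μ) (the transcritical bifurcation T₁₃); (iii) αˢ(1 − νˢ) = ζˢ (the transcritical bifurcation T₁₂). -/

import Mathlib

open Polynomial in
noncomputable def jacobianMatrix (F : (Fin 7 → ℝ) → (Fin 7 → ℝ)) (p : Fin 7 → ℝ) :
    Matrix (Fin 7) (Fin 7) ℝ :=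
  Matrix.of fun i j => fderiv ℝ (fun v => F v i) p (Pi.single j 1)

set_option maxHeartbeats 2000000 in
theorem singular_jacobian_at_v₁_iff
    (α αs β₁ β₂ μ γs γ₁ γ₂ κ₁ κ₂ ν νs ζs ζ : ℝ)
    (hα : 0 < α) (hαs : 0 < αs) (hβ₁pos : 0 < β₁) (hβ₂pos : 0 < β₂)
    (hμ : 0 < μ) (hγs : 0 < γs) (hγ₁ : 0 < γ₁) (hγ₂ : 0 < γ₂)
    (hκ₁ : 0 < κ₁) (hκ₂ : 0 < κ₂) (hν : 0 < ν) (hνs : 0 < νs)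
    (hζs : 0 < ζs) (hζ : 0 < ζ)
    (F : (Fin 7 → ℝ) → (Fin 7 → ℝ))
    (hF : ∀ v : Fin 7 → ℝ, F v = ![
      v 0 * (1 - v 0 - v 1) - α * v 0 * v 6 - αs * v 0 * v 5,
      v 1 * (β₁ - β₂ * (v 0 + v 1)) - α * v 1 * v 6,
      αs * v 5 * v 0 + μ * v 3 - γs * v 2,
      α * v 6 * v 0 - (μ + γ₁) * v 3,
      α * v 6 * v 1 - γ₂ * v 4,
      γs * v 2 - νs * αs * v 5 * v 0 - ζs * v 5,
      κ₁ * γ₁ * v 3 + κ₂ * γ₂ * v 4 - ν * α * v 6 * (v 0 + v 1) - ζ * v 6]) :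
    (jacobianMatrix F ![1, 0, 0, 0, 0, 0, 0]).det = 0 ↔
      (β₁ = β₂ ∨ α * ((κ₁ - ν) * γ₁ - μ * ν) = ζ * (γ₁ + μ) ∨ αs * (1 - νs) = ζs) := by
  set p : Fin 7 → ℝ := ![1, 0, 0, 0, 0, 0, 0] with hp
  have e0 : p 0 = 1 := rfl
  have e1 : p 1 = 0 := rfl
  have e2 : p 2 = 0 := rfl
  have e3 : p 3 = 0 := rfl
  have e4 : p 4 = 0 := rfl
  have e5 : p 5 = 0 := rfl
  have e6 : p 6 = 0 := rfl
  have v0 : ((0:Fin 7):ℕ) = 0 := rfl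
  have v1 : ((1:Fin 7):ℕ) = 1 := rfl
  have v2 : ((2:Fin 7):ℕ) = 2 := rfl
  have v3 : ((3:Fin 7):ℕ) = 3 := rfl
  have v4 : ((4:Fin 7):ℕ) = 4 := rfl
  have v5 : ((5:Fin 7):ℕ) = 5 := rfl
  have v6 : ((6:Fin 7):ℕ) = 6 := rfl
  have pr : ∀ k : Fin 7, HasFDerivAt (fun v : Fin 7 → ℝ => v k)
      (ContinuousLinearMap.proj k : (Fin 7 → ℝ) →L[ℝ] ℝ) p := fun k => hasFDerivAt_apply k p
  set M : Matrix (Fin 7) (Fin 7) ℝ :=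
    !![-1, -1, 0, 0, 0, -αs, -α;
       0, β₁ - β₂, 0, 0, 0, 0, 0;
       0, 0, -γs, μ, 0, αs, 0;
       0, 0, 0, -(μ + γ₁), 0, 0, α;
       0, 0, 0, 0, -γ₂, 0, 0;
       0, 0, γs, 0, 0, -(νs * αs + ζs), 0;
       0, 0, 0, κ₁ * γ₁, κ₂ * γ₂, 0, -(ν * α + ζ)] with hM
  have g0 : (fun v : Fin 7 → ℝ => F v 0)
      = (fun v => v 0 * (1 - v 0 - v 1) - α * v 0 * v 6 - αs * v 0 * v 5) :=
    funext fun v => by rw [hF]; rfl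
  have g1 : (fun v : Fin 7 → ℝ => F v 1)
      = (fun v => v 1 * (β₁ - β₂ * (v 0 + v 1)) - α * v 1 * v 6) :=
    funext fun v => by rw [hF]; rfl
  have g2 : (fun v : Fin 7 → ℝ => F v 2)
      = (fun v => αs * v 5 * v 0 + μ * v 3 - γs * v 2) :=
    funext fun v => by rw [hF]; rfl
  have g3 : (fun v : Fin 7 → ℝ => F v 3)
      = (fun v => α * v 6 * v 0 - (μ + γ₁) * v 3) :=
    funext fun v => by rw [hF]; rfl
  have g4 : (fun v : Fin 7 → ℝ => F v 4)
      = (fun v => α * v 6 * v 1 - γ₂ * v 4) :=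
    funext fun v => by rw [hF]; rfl
  have g5 : (fun v : Fin 7 → ℝ => F v 5)
      = (fun v => γs * v 2 - νs * αs * v 5 * v 0 - ζs * v 5) :=
    funext fun v => by rw [hF]; rfl
  have g6 : (fun v : Fin 7 → ℝ => F v 6)
      = (fun v => κ₁ * γ₁ * v 3 + κ₂ * γ₂ * v 4 - ν * α * v 6 * (v 0 + v 1) - ζ * v 6) :=
    funext fun v => by rw [hF]; rfl
  have row0 : ∀ j, jacobianMatrix F p 0 j = ![(-1:ℝ), -1, 0, 0, 0, -αs, -α] j := by
    intro j
    have h : HasFDerivAt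
        (fun v : Fin 7 → ℝ => v 0 * (1 - v 0 - v 1) - α * v 0 * v 6 - αs * v 0 * v 5) _ p :=
      (((pr 0).mul (((hasFDerivAt_const (1:ℝ) p).sub (pr 0)).sub (pr 1))).sub
        (((pr 0).const_mul α).mul (pr 6))).sub (((pr 0).const_mul αs).mul (pr 5))
    show fderiv ℝ (fun v => F v 0) p (Pi.single j 1) = ![(-1:ℝ), -1, 0, 0, 0, -αs, -α] j
    rw [g0, h.fderiv]
    fin_cases j <;>
      norm_num [e0, e1, e2, e3, e4, e5, e6, Pi.single_apply, Matrix.cons_val_succ, Fin.ext_iff, v0, v1, v2, v3, v4, v5, v6, Matrix.vecHead, Matrix.vecTail, Function.comp] <;>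
      (try rfl) <;> (try ring)
  have row1 : ∀ j, jacobianMatrix F p 1 j = ![(0:ℝ), β₁ - β₂, 0, 0, 0, 0, 0] j := by
    intro j
    have h : HasFDerivAt
        (fun v : Fin 7 → ℝ => v 1 * (β₁ - β₂ * (v 0 + v 1)) - α * v 1 * v 6) _ p :=
      ((pr 1).mul ((hasFDerivAt_const β₁ p).sub (((pr 0).add (pr 1)).const_mul β₂))).sub
        (((pr 1).const_mul α).mul (pr 6))
    show fderiv ℝ (fun v => F v 1) p (Pi.single j 1) = ![(0:ℝ), β₁ - β₂, 0, 0, 0, 0, 0] j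
    rw [g1, h.fderiv]
    fin_cases j <;>
      norm_num [e0, e1, e2, e3, e4, e5, e6, Pi.single_apply, Matrix.cons_val_succ, Fin.ext_iff, v0, v1, v2, v3, v4, v5, v6, Matrix.vecHead, Matrix.vecTail, Function.comp] <;>
      (try rfl) <;> (try ring)
  have row2 : ∀ j, jacobianMatrix F p 2 j = ![(0:ℝ), 0, -γs, μ, 0, αs, 0] j := by
    intro j
    have h : HasFDerivAt
        (fun v : Fin 7 → ℝ => αs * v 5 * v 0 + μ * v 3 - γs * v 2) _ p :=
      ((((pr 5).const_mul αs).mul (pr 0)).add ((pr 3).const_mul μ)).sub ((pr 2).const_mul γs)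
    show fderiv ℝ (fun v => F v 2) p (Pi.single j 1) = ![(0:ℝ), 0, -γs, μ, 0, αs, 0] j
    rw [g2, h.fderiv]
    fin_cases j <;>
      norm_num [e0, e1, e2, e3, e4, e5, e6, Pi.single_apply, Matrix.cons_val_succ, Fin.ext_iff, v0, v1, v2, v3, v4, v5, v6, Matrix.vecHead, Matrix.vecTail, Function.comp] <;>
      (try rfl) <;> (try ring)
  have row3 : ∀ j, jacobianMatrix F p 3 j = ![(0:ℝ), 0, 0, -(μ + γ₁), 0, 0, α] j := by
    intro j
    have h : HasFDerivAt
        (fun v : Fin 7 → ℝ => α * v 6 * v 0 - (μ + γ₁) * v 3) _ p :=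
      (((pr 6).const_mul α).mul (pr 0)).sub ((pr 3).const_mul (μ + γ₁))
    show fderiv ℝ (fun v => F v 3) p (Pi.single j 1) = ![(0:ℝ), 0, 0, -(μ + γ₁), 0, 0, α] j
    rw [g3, h.fderiv]
    fin_cases j <;>
      norm_num [e0, e1, e2, e3, e4, e5, e6, Pi.single_apply, Matrix.cons_val_succ, Fin.ext_iff, v0, v1, v2, v3, v4, v5, v6, Matrix.vecHead, Matrix.vecTail, Function.comp] <;>
      (try rfl) <;> (try ring)
  have row4 : ∀ j, jacobianMatrix F p 4 j = ![(0:ℝ), 0, 0, 0, -γ₂, 0, 0] j := by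
    intro j
    have h : HasFDerivAt
        (fun v : Fin 7 → ℝ => α * v 6 * v 1 - γ₂ * v 4) _ p :=
      (((pr 6).const_mul α).mul (pr 1)).sub ((pr 4).const_mul γ₂)
    show fderiv ℝ (fun v => F v 4) p (Pi.single j 1) = ![(0:ℝ), 0, 0, 0, -γ₂, 0, 0] j
    rw [g4, h.fderiv]
    fin_cases j <;>
      norm_num [e0, e1, e2, e3, e4, e5, e6, Pi.single_apply, Matrix.cons_val_succ, Fin.ext_iff, v0, v1, v2, v3, v4, v5, v6, Matrix.vecHead, Matrix.vecTail, Function.comp] <;>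
      (try rfl) <;> (try ring)
  have row5 : ∀ j, jacobianMatrix F p 5 j = ![(0:ℝ), 0, γs, 0, 0, -(νs * αs + ζs), 0] j := by
    intro j
    have h : HasFDerivAt
        (fun v : Fin 7 → ℝ => γs * v 2 - νs * αs * v 5 * v 0 - ζs * v 5) _ p :=
      (((pr 2).const_mul γs).sub ((((pr 5).const_mul (νs * αs)).mul (pr 0)))).sub
        ((pr 5).const_mul ζs)
    show fderiv ℝ (fun v => F v 5) p (Pi.single j 1) = ![(0:ℝ), 0, γs, 0, 0, -(νs * αs + ζs), 0] j
    rw [g5, h.fderiv]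
    fin_cases j <;>
      norm_num [e0, e1, e2, e3, e4, e5, e6, Pi.single_apply, Matrix.cons_val_succ, Fin.ext_iff, v0, v1, v2, v3, v4, v5, v6, Matrix.vecHead, Matrix.vecTail, Function.comp] <;>
      (try rfl) <;> (try ring)
  have row6 : ∀ j, jacobianMatrix F p 6 j = ![(0:ℝ), 0, 0, κ₁ * γ₁, κ₂ * γ₂, 0, -(ν * α + ζ)] j := by
    intro j
    have h : HasFDerivAt
        (fun v : Fin 7 → ℝ =>
          κ₁ * γ₁ * v 3 + κ₂ * γ₂ * v 4 - ν * α * v 6 * (v 0 + v 1) - ζ * v 6) _ p :=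
      ((((pr 3).const_mul (κ₁ * γ₁)).add ((pr 4).const_mul (κ₂ * γ₂))).sub
        ((((pr 6).const_mul (ν * α)).mul ((pr 0).add (pr 1))))).sub ((pr 6).const_mul ζ)
    show fderiv ℝ (fun v => F v 6) p (Pi.single j 1) = ![(0:ℝ), 0, 0, κ₁ * γ₁, κ₂ * γ₂, 0, -(ν * α + ζ)] j
    rw [g6, h.fderiv]
    fin_cases j <;>
      norm_num [e0, e1, e2, e3, e4, e5, e6, Pi.single_apply, Matrix.cons_val_succ, Fin.ext_iff, v0, v1, v2, v3, v4, v5, v6, Matrix.vecHead, Matrix.vecTail, Function.comp] <;>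
      (try rfl) <;> (try ring)
  have key : jacobianMatrix F p = M := by
    funext i j
    fin_cases i
    · show jacobianMatrix F p 0 j = ![(-1:ℝ), -1, 0, 0, 0, -αs, -α] j; exact row0 j
    · show jacobianMatrix F p 1 j = ![(0:ℝ), β₁ - β₂, 0, 0, 0, 0, 0] j; exact row1 j
    · show jacobianMatrix F p 2 j = ![(0:ℝ), 0, -γs, μ, 0, αs, 0] j; exact row2 j
    · show jacobianMatrix F p 3 j = ![(0:ℝ), 0, 0, -(μ + γ₁), 0, 0, α] j; exact row3 j
    · show jacobianMatrix F p 4 j = ![(0:ℝ), 0, 0, 0, -γ₂, 0, 0] j; exact row4 j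
    · show jacobianMatrix F p 5 j = ![(0:ℝ), 0, γs, 0, 0, -(νs * αs + ζs), 0] j; exact row5 j
    · show jacobianMatrix F p 6 j = ![(0:ℝ), 0, 0, κ₁ * γ₁, κ₂ * γ₂, 0, -(ν * α + ζ)] j; exact row6 j
  have d7 : M.det = -(!![β₁ - β₂, 0, 0, 0, 0, 0;
        0, -γs, μ, 0, αs, 0;
        0, 0, -(μ + γ₁), 0, 0, α;
        0, 0, 0, -γ₂, 0, 0;
        0, γs, 0, 0, -(νs * αs + ζs), 0;
        0, 0, κ₁ * γ₁, κ₂ * γ₂, 0, -(ν * α + ζ)] : Matrix (Fin 6) (Fin 6) ℝ).det := by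
    rw [hM, Matrix.det_succ_column_zero, Fin.sum_univ_seven]
    have s : (!![-1, -1, 0, 0, 0, -αs, -α;
       0, β₁ - β₂, 0, 0, 0, 0, 0;
       0, 0, -γs, μ, 0, αs, 0;
       0, 0, 0, -(μ + γ₁), 0, 0, α;
       0, 0, 0, 0, -γ₂, 0, 0;
       0, 0, γs, 0, 0, -(νs * αs + ζs), 0;
       0, 0, 0, κ₁ * γ₁, κ₂ * γ₂, 0, -(ν * α + ζ)] : Matrix (Fin 7) (Fin 7) ℝ).submatrix
       (Fin.succAbove 0) Fin.succ
      = (!![β₁ - β₂, 0, 0, 0, 0, 0;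
        0, -γs, μ, 0, αs, 0;
        0, 0, -(μ + γ₁), 0, 0, α;
        0, 0, 0, -γ₂, 0, 0;
        0, γs, 0, 0, -(νs * αs + ζs), 0;
        0, 0, κ₁ * γ₁, κ₂ * γ₂, 0, -(ν * α + ζ)] : Matrix (Fin 6) (Fin 6) ℝ) := by
      ext i j
      fin_cases i <;> fin_cases j <;> rfl
    rw [s, show (!![-1, -1, 0, 0, 0, -αs, -α;
       0, β₁ - β₂, 0, 0, 0, 0, 0;
       0, 0, -γs, μ, 0, αs, 0;
       0, 0, 0, -(μ + γ₁), 0, 0, α;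
       0, 0, 0, 0, -γ₂, 0, 0;
       0, 0, γs, 0, 0, -(νs * αs + ζs), 0;
       0, 0, 0, κ₁ * γ₁, κ₂ * γ₂, 0, -(ν * α + ζ)] : Matrix (Fin 7) (Fin 7) ℝ) 1 0 = 0 from rfl, show (!![-1, -1, 0, 0, 0, -αs, -α;
       0, β₁ - β₂, 0, 0, 0, 0, 0;
       0, 0, -γs, μ, 0, αs, 0;
       0, 0, 0, -(μ + γ₁), 0, 0, α;
       0, 0, 0, 0, -γ₂, 0, 0;
       0, 0, γs, 0, 0, -(νs * αs + ζs), 0;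
       0, 0, 0, κ₁ * γ₁, κ₂ * γ₂, 0, -(ν * α + ζ)] : Matrix (Fin 7) (Fin 7) ℝ) 2 0 = 0 from rfl,
      show (!![-1, -1, 0, 0, 0, -αs, -α;
       0, β₁ - β₂, 0, 0, 0, 0, 0;
       0, 0, -γs, μ, 0, αs, 0;
       0, 0, 0, -(μ + γ₁), 0, 0, α;
       0, 0, 0, 0, -γ₂, 0, 0;
       0, 0, γs, 0, 0, -(νs * αs + ζs), 0;
       0, 0, 0, κ₁ * γ₁, κ₂ * γ₂, 0, -(ν * α + ζ)] : Matrix (Fin 7) (Fin 7) ℝ) 3 0 = 0 from rfl, show (!![-1, -1, 0, 0, 0, -αs, -α;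
       0, β₁ - β₂, 0, 0, 0, 0, 0;
       0, 0, -γs, μ, 0, αs, 0;
       0, 0, 0, -(μ + γ₁), 0, 0, α;
       0, 0, 0, 0, -γ₂, 0, 0;
       0, 0, γs, 0, 0, -(νs * αs + ζs), 0;
       0, 0, 0, κ₁ * γ₁, κ₂ * γ₂, 0, -(ν * α + ζ)] : Matrix (Fin 7) (Fin 7) ℝ) 4 0 = 0 from rfl,
      show (!![-1, -1, 0, 0, 0, -αs, -α;
       0, β₁ - β₂, 0, 0, 0, 0, 0;
       0, 0, -γs, μ, 0, αs, 0;
       0, 0, 0, -(μ + γ₁), 0, 0, α;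
       0, 0, 0, 0, -γ₂, 0, 0;
       0, 0, γs, 0, 0, -(νs * αs + ζs), 0;
       0, 0, 0, κ₁ * γ₁, κ₂ * γ₂, 0, -(ν * α + ζ)] : Matrix (Fin 7) (Fin 7) ℝ) 5 0 = 0 from rfl, show (!![-1, -1, 0, 0, 0, -αs, -α;
       0, β₁ - β₂, 0, 0, 0, 0, 0;
       0, 0, -γs, μ, 0, αs, 0;
       0, 0, 0, -(μ + γ₁), 0, 0, α;
       0, 0, 0, 0, -γ₂, 0, 0;
       0, 0, γs, 0, 0, -(νs * αs + ζs), 0;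
       0, 0, 0, κ₁ * γ₁, κ₂ * γ₂, 0, -(ν * α + ζ)] : Matrix (Fin 7) (Fin 7) ℝ) 6 0 = 0 from rfl]
    norm_num [Matrix.cons_val_succ, Matrix.vecHead, Matrix.vecTail, Function.comp,
      show Matrix.vecCons (-1:ℝ) (fun _ : Fin 6 => (0:ℝ)) 5 = 0 from rfl,
      show Matrix.vecCons (-1:ℝ) (fun _ : Fin 6 => (0:ℝ)) 6 = 0 from rfl]
  have d6 : (!![β₁ - β₂, 0, 0, 0, 0, 0;
        0, -γs, μ, 0, αs, 0;
        0, 0, -(μ + γ₁), 0, 0, α;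
        0, 0, 0, -γ₂, 0, 0;
        0, γs, 0, 0, -(νs * αs + ζs), 0;
        0, 0, κ₁ * γ₁, κ₂ * γ₂, 0, -(ν * α + ζ)] : Matrix (Fin 6) (Fin 6) ℝ).det
      = (β₁ - β₂) * (!![-γs, μ, 0, αs, 0;
        0, -(μ + γ₁), 0, 0, α;
        0, 0, -γ₂, 0, 0;
        γs, 0, 0, -(νs * αs + ζs), 0;
        0, κ₁ * γ₁, κ₂ * γ₂, 0, -(ν * α + ζ)] : Matrix (Fin 5) (Fin 5) ℝ).det := by
    rw [Matrix.det_succ_column_zero, Fin.sum_univ_six]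
    have s : (!![β₁ - β₂, 0, 0, 0, 0, 0;
        0, -γs, μ, 0, αs, 0;
        0, 0, -(μ + γ₁), 0, 0, α;
        0, 0, 0, -γ₂, 0, 0;
        0, γs, 0, 0, -(νs * αs + ζs), 0;
        0, 0, κ₁ * γ₁, κ₂ * γ₂, 0, -(ν * α + ζ)] : Matrix (Fin 6) (Fin 6) ℝ).submatrix
       (Fin.succAbove 0) Fin.succ
      = (!![-γs, μ, 0, αs, 0;
        0, -(μ + γ₁), 0, 0, α;
        0, 0, -γ₂, 0, 0;
        γs, 0, 0, -(νs * αs + ζs), 0;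
        0, κ₁ * γ₁, κ₂ * γ₂, 0, -(ν * α + ζ)] : Matrix (Fin 5) (Fin 5) ℝ) := by
      ext i j
      fin_cases i <;> fin_cases j <;> rfl
    rw [s, show (!![β₁ - β₂, 0, 0, 0, 0, 0;
        0, -γs, μ, 0, αs, 0;
        0, 0, -(μ + γ₁), 0, 0, α;
        0, 0, 0, -γ₂, 0, 0;
        0, γs, 0, 0, -(νs * αs + ζs), 0;
        0, 0, κ₁ * γ₁, κ₂ * γ₂, 0, -(ν * α + ζ)] : Matrix (Fin 6) (Fin 6) ℝ) 1 0 = 0 from rfl, show (!![β₁ - β₂, 0, 0, 0, 0, 0;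
        0, -γs, μ, 0, αs, 0;
        0, 0, -(μ + γ₁), 0, 0, α;
        0, 0, 0, -γ₂, 0, 0;
        0, γs, 0, 0, -(νs * αs + ζs), 0;
        0, 0, κ₁ * γ₁, κ₂ * γ₂, 0, -(ν * α + ζ)] : Matrix (Fin 6) (Fin 6) ℝ) 2 0 = 0 from rfl,
      show (!![β₁ - β₂, 0, 0, 0, 0, 0;
        0, -γs, μ, 0, αs, 0;
        0, 0, -(μ + γ₁), 0, 0, α;
        0, 0, 0, -γ₂, 0, 0;
        0, γs, 0, 0, -(νs * αs + ζs), 0;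
        0, 0, κ₁ * γ₁, κ₂ * γ₂, 0, -(ν * α + ζ)] : Matrix (Fin 6) (Fin 6) ℝ) 3 0 = 0 from rfl, show (!![β₁ - β₂, 0, 0, 0, 0, 0;
        0, -γs, μ, 0, αs, 0;
        0, 0, -(μ + γ₁), 0, 0, α;
        0, 0, 0, -γ₂, 0, 0;
        0, γs, 0, 0, -(νs * αs + ζs), 0;
        0, 0, κ₁ * γ₁, κ₂ * γ₂, 0, -(ν * α + ζ)] : Matrix (Fin 6) (Fin 6) ℝ) 4 0 = 0 from rfl,
      show (!![β₁ - β₂, 0, 0, 0, 0, 0;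
        0, -γs, μ, 0, αs, 0;
        0, 0, -(μ + γ₁), 0, 0, α;
        0, 0, 0, -γ₂, 0, 0;
        0, γs, 0, 0, -(νs * αs + ζs), 0;
        0, 0, κ₁ * γ₁, κ₂ * γ₂, 0, -(ν * α + ζ)] : Matrix (Fin 6) (Fin 6) ℝ) 5 0 = 0 from rfl]
    norm_num [Matrix.cons_val_succ, Matrix.vecHead, Matrix.vecTail, Function.comp,
      show Matrix.vecCons (β₁ - β₂) (fun _ : Fin 5 => (0:ℝ)) 5 = 0 from rfl]
  have d5 : (!![-γs, μ, 0, αs, 0;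
        0, -(μ + γ₁), 0, 0, α;
        0, 0, -γ₂, 0, 0;
        γs, 0, 0, -(νs * αs + ζs), 0;
        0, κ₁ * γ₁, κ₂ * γ₂, 0, -(ν * α + ζ)] : Matrix (Fin 5) (Fin 5) ℝ).det
      = (γ₂ * γs) * (((μ + γ₁) * (ν * α + ζ) - α * (κ₁ * γ₁)) * (αs * (1 - νs) - ζs)) := by
    simp [Matrix.det_succ_row_zero, Fin.sum_univ_succ, Fin.succAbove, Fin.castSucc,
      Fin.castAdd, Fin.castLE]
    ring
  rw [key, d7, d6, d5, neg_eq_zero]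
  constructor
  · intro h
    rcases mul_eq_zero.1 h with h1 | h2
    · exact Or.inl (sub_eq_zero.mp h1)
    · rcases mul_eq_zero.1 h2 with h3 | h4
      · exact absurd h3 (mul_pos hγ₂ hγs).ne'
      · rcases mul_eq_zero.1 h4 with h5 | h6
        · exact Or.inr (Or.inl (by linear_combination -h5))
        · exact Or.inr (Or.inr (by linear_combination h6))
  · rintro (h | h | h)
    · rw [h]; ring
    · linear_combination (-((β₁ - β₂) * ((γ₂ * γs) * (αs * (1 - νs) - ζs)))) * h
    · linear_combination
        ((β₁ - β₂) * ((γ₂ * γs) * ((μ + γ₁) * (ν * α + ζ) - α * (κ₁ * γ₁)))) * h
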